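/- Let G be a finite group of order n and Λ = (α₁,α₂,α₃) a light dual multinet labeled by G in PG(2,K). Suppose a line ℓ belongs to Λ with ℓ ∩ αᵢ(G) = αᵢ(H) for a subgroup H of G, i = 1,2,3. If for some g ∈ G the three points α₁(g), α₂(g), α₃(g) are contained in a common line m, then α₁(1), α₂(1) ∈ m, m = ℓ, and g ∈ H. -/

import Mathlib

open Matrix

noncomputable section

/-- The projective plane over `K`, as the projectivization of `K³`. -/
abbrev PP (K : Type*) [Field K] := Projectivization K (Fin 3 → K)

/-- Three points of `PG(2,K)` are collinear iff the determinant of the matrix of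
representatives vanishes. -/
def Col {K : Type*} [Field K] (p q r : PP K) : Prop :=
  Matrix.det (Matrix.of ![p.rep, q.rep, r.rep]) = 0

/-- The point `p` lies on the line with coordinate covector `u`. -/
def OnLine {K : Type*} [Field K] (u : Fin 3 → K) (p : PP K) : Prop :=
  u ⬝ᵥ p.rep = 0

section Aux

variable {K : Type*} [Field K]

/-- If the rows of a 3×3 matrix are linearly dependent and the first two rows are
independent, then the third row is in their span. -/
lemma mem_span_of_det_zero {a b c : Fin 3 → K}
    (hab : LinearIndependent K ![a, b])
    (h : Matrix.det (Matrix.of ![a, b, c]) = 0) : ∃ s t : K, c = s • a + t • b := by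
  obtain ⟨g, hg, hg0⟩ := (Matrix.exists_vecMul_eq_zero_iff).mpr h
  have hg0' : g 0 • a + g 1 • b + g 2 • c = 0 := by
    rw [← hg0]; funext j; simp [Matrix.vecMul, dotProduct, Fin.sum_univ_three]
  by_cases h2 : g 2 = 0
  · exfalso
    rw [h2, zero_smul, add_zero] at hg0'
    obtain ⟨h0, h1⟩ := LinearIndependent.pair_iff.mp hab _ _ hg0'
    exact hg (by funext i; fin_cases i <;> simpa)
  · refine ⟨(g 2)⁻¹ * -(g 0), (g 2)⁻¹ * -(g 1), ?_⟩
    have h' : g 2 • c = (-(g 0)) • a + (-(g 1)) • b := by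
      linear_combination (norm := module) hg0'
    have hc : c = (g 2)⁻¹ • ((-(g 0)) • a + (-(g 1)) • b) := by
      rw [← h', inv_smul_smul₀ h2]
    rw [smul_add, smul_smul, smul_smul] at hc
    exact hc

/-- If a nonzero covector annihilates all three rows, the determinant vanishes. -/
lemma det_zero_of_three_onLine {u a b c : Fin 3 → K} (hu : u ≠ 0)
    (ha : u ⬝ᵥ a = 0) (hb : u ⬝ᵥ b = 0) (hc : u ⬝ᵥ c = 0) :
    Matrix.det (Matrix.of ![a, b, c]) = 0 := by
  rw [← Matrix.exists_mulVec_eq_zero_iff]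
  refine ⟨u, hu, ?_⟩
  funext i
  fin_cases i <;>
    simp only [Matrix.mulVec, Matrix.of_apply, Fin.isValue, Fin.zero_eta, Fin.mk_one,
      Matrix.cons_val_zero, Matrix.cons_val_one, Matrix.head_cons, Pi.zero_apply]
  · rw [dotProduct_comm]; exact ha
  · rw [dotProduct_comm]; exact hb
  · show c ⬝ᵥ u = 0
    rw [dotProduct_comm]; exact hc

lemma det_swap23 {a b c : Fin 3 → K} (h : Matrix.det (Matrix.of ![a, b, c]) = 0) :
    Matrix.det (Matrix.of ![a, c, b]) = 0 := by
  simp only [Matrix.det_fin_three, Matrix.of_apply, Matrix.cons_val', Matrix.cons_val_zero,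
    Matrix.cons_val_one, Matrix.head_cons, Matrix.empty_val', Matrix.cons_val_fin_one,
    Matrix.cons_val_two, Matrix.tail_cons, Matrix.head_fin_const] at h ⊢
  linear_combination -h

lemma det_cyc {a b c : Fin 3 → K} (h : Matrix.det (Matrix.of ![a, b, c]) = 0) :
    Matrix.det (Matrix.of ![b, c, a]) = 0 := by
  simp only [Matrix.det_fin_three, Matrix.of_apply, Matrix.cons_val', Matrix.cons_val_zero,
    Matrix.cons_val_one, Matrix.head_cons, Matrix.empty_val', Matrix.cons_val_fin_one,
    Matrix.cons_val_two, Matrix.tail_cons, Matrix.head_fin_const] at h ⊢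
  linear_combination h

/-- Representatives of distinct projective points are linearly independent. -/
lemma rep_pair_li {p q : PP K} (h : p ≠ q) : LinearIndependent K ![p.rep, q.rep] := by
  have := (Projectivization.independent_pair_iff_ne p q).mpr h
  rw [Projectivization.independent_iff] at this
  have heq : (Projectivization.rep ∘ ![p, q]) = ![p.rep, q.rep] := by
    funext i; fin_cases i <;> rfl
  rwa [heq] at this

/-- If `p ≠ q` lie on the line `v` and `r` is in the span of their representatives,
then `r` lies on `v`. -/
lemma onLine_of_span {v : Fin 3 → K} {p q : PP K} (hpq : p ≠ q)
    (hp : OnLine v p) (hq : OnLine v q) {c : Fin 3 → K}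
    (hdet : Matrix.det (Matrix.of ![p.rep, q.rep, c]) = 0) : v ⬝ᵥ c = 0 := by
  obtain ⟨s, t, hst⟩ := mem_span_of_det_zero (rep_pair_li hpq) hdet
  rw [hst, dotProduct_add, dotProduct_smul, dotProduct_smul]
  rw [OnLine] at hp hq
  rw [hp, hq]
  simp

end Aux

/-- For a `G`-labeled light dual multinet with line `ℓ` satisfying `ℓ ∩ αᵢ(G) = αᵢ(H)`:
if `α₁(g), α₂(g), α₃(g)` lie on a common line `m`, then `α₁(1), α₂(1) ∈ m`, `m = ℓ`,
and `g ∈ H`. -/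
theorem same_label_collinear_forces_line {K : Type*} [Field K]
    {G : Type*} [Group G] [Finite G]
    (α₁ α₂ α₃ : G → PP K)
    (hinj₁ : Function.Injective α₁) (hinj₂ : Function.Injective α₂)
    (hinj₃ : Function.Injective α₃)
    (hdisj₁₂ : Disjoint (Set.range α₁) (Set.range α₂))
    (hdisj₁₃ : Disjoint (Set.range α₁) (Set.range α₃))
    (hdisj₂₃ : Disjoint (Set.range α₂) (Set.range α₃))
    (hcol : ∀ x y : G, Col (α₁ x) (α₂ y) (α₃ (x * y)))
    (u : Fin 3 → K) (hu : u ≠ 0) (H : Subgroup G)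
    (hH₁ : ∀ x : G, OnLine u (α₁ x) ↔ x ∈ H)
    (hH₂ : ∀ x : G, OnLine u (α₂ x) ↔ x ∈ H)
    (hH₃ : ∀ x : G, OnLine u (α₃ x) ↔ x ∈ H)
    (g : G) (v : Fin 3 → K) (hv : v ≠ 0)
    (hm₁ : OnLine v (α₁ g)) (hm₂ : OnLine v (α₂ g)) (hm₃ : OnLine v (α₃ g)) :
    OnLine v (α₁ 1) ∧ OnLine v (α₂ 1) ∧
      (∀ p : PP K, OnLine v p ↔ OnLine u p) ∧ g ∈ H := by
  -- distinctness of differently-indexed points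
  have hne₁₃ : α₁ g ≠ α₃ g := fun h =>
    (Set.disjoint_left.mp hdisj₁₃) ⟨g, rfl⟩ ⟨g, h.symm⟩
  have hne₂₃ : α₂ g ≠ α₃ g := fun h =>
    (Set.disjoint_left.mp hdisj₂₃) ⟨g, rfl⟩ ⟨g, h.symm⟩
  have hne₁₂' : α₁ 1 ≠ α₂ 1 := fun h =>
    (Set.disjoint_left.mp hdisj₁₂) ⟨1, rfl⟩ ⟨1, h.symm⟩
  -- α₂ 1 lies on m, from collinearity of α₁ g, α₂ 1, α₃ (g*1) = α₃ g
  have hc1 : Col (α₁ g) (α₂ 1) (α₃ g) := by have := hcol g 1; rwa [mul_one] at this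
  have hv₂ : OnLine v (α₂ 1) :=
    onLine_of_span hne₁₃ hm₁ hm₃ (det_swap23 hc1)
  -- α₁ 1 lies on m, from collinearity of α₁ 1, α₂ g, α₃ (1*g) = α₃ g
  have hc2 : Col (α₁ 1) (α₂ g) (α₃ g) := by have := hcol 1 g; rwa [one_mul] at this
  have hv₁ : OnLine v (α₁ 1) :=
    onLine_of_span hne₂₃ hm₂ hm₃ (det_cyc hc2)
  -- α₁ 1 and α₂ 1 both lie on ℓ
  have hu₁ : OnLine u (α₁ 1) := (hH₁ 1).mpr H.one_mem
  have hu₂ : OnLine u (α₂ 1) := (hH₂ 1).mpr H.one_mem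
  -- m and ℓ have the same points
  have hlines : ∀ p : PP K, OnLine v p ↔ OnLine u p := by
    intro p
    constructor
    · intro hp
      exact onLine_of_span hne₁₂' hu₁ hu₂
        (det_zero_of_three_onLine hv hv₁ hv₂ hp)
    · intro hp
      exact onLine_of_span hne₁₂' hv₁ hv₂
        (det_zero_of_three_onLine hu hu₁ hu₂ hp)
  have hgH : g ∈ H := (hH₁ g).mp ((hlines (α₁ g)).mp hm₁)
  exact ⟨hv₁, hv₂, hlines, hgH⟩

end
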